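/- Let $A=(a_j^i)$ be an $N\times n$ real matrix with columns $w_1,\dots,w_n$, let $1\le q<\infty$ and $0<\varepsilon<1$, and assume $|a_j^i|\le \varepsilon\,\|w_j\|_{\ell_q^N}$ for every $i\in\{1,\dots,N\}$ and $j\in\{1,\dots,n\}$. Then there exists a partition $\{1,\dots,N\}=\Omega_1\cup\Omega_2$, $\Omega_1\cap\Omega_2=\emptyset$, such that for $k=1,2$, $\|A(\Omega_k)\|_{(1,q)}\le \left(\frac{1+n\varepsilon^q}{2}\right)^{1/q}\|A\|_{(1,q)}$. -/

import Mathlib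

open Finset

/-- Generalized triangle (Minkowski) inequality for `q`-sums of a matrix-vector product. -/
lemma mink {N n : ℕ} (A : Matrix (Fin N) (Fin n) ℝ) (Ω : Finset (Fin N)) {q : ℝ} (hq : 1 ≤ q)
    (x : Fin n → ℝ) (s : Finset (Fin n)) :
    (∑ i ∈ Ω, |∑ j ∈ s, A i j * x j| ^ q) ^ (1 / q) ≤
      ∑ j ∈ s, |x j| * (∑ i ∈ Ω, |A i j| ^ q) ^ (1 / q) := by
  have hq0 : q ≠ 0 := by positivity
  induction s using Finset.induction with
  | empty => simp [Real.zero_rpow hq0, Real.zero_rpow (inv_ne_zero hq0)]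
  | @insert j s hj ih =>
    have h1 : ∀ i, ∑ j' ∈ insert j s, A i j' * x j' = A i j * x j + ∑ j' ∈ s, A i j' * x j' :=
      fun i => Finset.sum_insert hj
    simp only [h1, Finset.sum_insert hj]
    refine le_trans (Real.Lp_add_le Ω _ _ hq) (add_le_add ?_ ih)
    have h2 : ∀ i, |A i j * x j| ^ q = |A i j| ^ q * |x j| ^ q := by
      intro i
      rw [abs_mul, Real.mul_rpow (abs_nonneg _) (abs_nonneg _)]
    simp only [h2, ← Finset.sum_mul]
    rw [Real.mul_rpow (by positivity) (by positivity), ← Real.rpow_mul (abs_nonneg _),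
      mul_one_div_cancel hq0, Real.rpow_one, mul_comm]

/-- Vertex rounding: any point of the cube `[-1,1]^N` can be moved, keeping the `m` linear
forms given by `B` fixed, to a point with at most `m` non-extreme coordinates. -/
lemma round_step {N m : ℕ} (B : Fin N → Fin m → ℝ) :
    ∀ k : ℕ, ∀ x : Fin N → ℝ, (∀ i, |x i| ≤ 1) →
      ({i | |x i| ≠ 1} : Finset (Fin N)).card ≤ k →
      ∃ y : Fin N → ℝ, (∀ i, |y i| ≤ 1) ∧
        (∀ j, ∑ i, y i * B i j = ∑ i, x i * B i j) ∧
        ({i | |y i| ≠ 1} : Finset (Fin N)).card ≤ m := by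
  intro k
  induction k with
  | zero => exact fun x hx hc => ⟨x, hx, fun j => rfl, le_trans hc (Nat.zero_le m)⟩
  | succ k ih =>
    intro x hx hcard
    by_cases hF : ({i | |x i| ≠ 1} : Finset (Fin N)).card ≤ m
    · exact ⟨x, hx, fun j => rfl, hF⟩
    · push_neg at hF
      set F : Finset (Fin N) := {i | |x i| ≠ 1} with hFdef
      -- the rows indexed by F are linearly dependent
      have hdep : ¬ LinearIndependent ℝ (fun i : F => B i) := by
        intro hli
        have h1 := hli.fintype_card_le_finrank
        rw [Module.finrank_fintype_fun_eq_card, Fintype.card_coe, Fintype.card_fin] at h1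
        omega
      rw [Fintype.not_linearIndependent_iff] at hdep
      obtain ⟨g, hg, i0, hi0⟩ := hdep
      classical
      set z : Fin N → ℝ := fun i => if h : i ∈ F then g ⟨i, h⟩ else 0 with hzdef
      have hzF : ∀ i, i ∉ F → z i = 0 := fun i h => dif_neg h
      have hz : ∀ j, ∑ i, z i * B i j = 0 := by
        intro j
        rw [← Finset.sum_subset (Finset.subset_univ F)
          (fun i _ hi => by rw [hzF i hi, zero_mul])]
        rw [← Finset.sum_attach F (fun i => z i * B i j)]
        have := congrFun hg j
        simpa [z] using this
      set T : Finset (Fin N) := F.filter (fun i => z i ≠ 0) with hTdef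
      have hi0T : (i0 : Fin N) ∈ T := by
        simp only [hTdef, Finset.mem_filter]
        refine ⟨i0.2, ?_⟩
        simpa [z, dif_pos i0.2] using hi0
      have hTF : ∀ i ∈ T, i ∈ F ∧ z i ≠ 0 := fun i hi => Finset.mem_filter.mp hi
      have hxF : ∀ i ∈ F, |x i| < 1 := by
        intro i hi
        have : |x i| ≠ 1 := by simpa [hFdef] using hi
        exact lt_of_le_of_ne (hx i) this
      set b : Fin N → ℝ := fun i => if 0 < z i then (1 - x i) / z i else (-1 - x i) / z i
        with hbdef
      obtain ⟨istar, histar, hmin⟩ := T.exists_min_image b ⟨i0, hi0T⟩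
      set t : ℝ := b istar with htdef
      have hb_nonneg : ∀ i ∈ T, 0 ≤ b i := by
        intro i hi
        obtain ⟨hiF, hiz⟩ := hTF i hi
        have hxi := hxF i hiF
        rcases lt_or_gt_of_ne hiz with hneg | hpos
        · have : ¬ (0 < z i) := not_lt.mpr hneg.le
          rw [hbdef]
          simp only [this, if_false]
          have h1 : -1 ≤ x i := (abs_le.mp (hx i)).1
          exact div_nonneg_of_nonpos (by linarith) hneg.le
        · rw [hbdef]
          simp only [hpos, if_true]
          apply div_nonneg _ hpos.le
          have : x i ≤ 1 := (abs_le.mp (hx i)).2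
          linarith
      have ht0 : 0 ≤ t := hb_nonneg istar histar
      set y : Fin N → ℝ := fun i => x i + t * z i with hydef
      have hyT : ∀ i, i ∉ T → y i = x i := by
        intro i hi
        have hz0 : z i = 0 := by
          by_cases hiF : i ∈ F
          · by_contra h
            exact hi (Finset.mem_filter.mpr ⟨hiF, h⟩)
          · exact hzF i hiF
        simp [hydef, hz0]
      have hy1 : ∀ i, |y i| ≤ 1 := by
        intro i
        by_cases hiT : i ∈ T
        · obtain ⟨hiF, hiz⟩ := hTF i hiT
          have hti := hmin i hiT
          have hx1 := (abs_le.mp (hx i)).1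
          have hx2 := (abs_le.mp (hx i)).2
          rw [abs_le]
          rcases lt_or_gt_of_ne hiz with hneg | hpos
          · have hb : b i = (-1 - x i) / z i := by
              rw [hbdef]; simp [not_lt.mpr hneg.le]
            have h1 : -1 - x i ≤ t * z i := by
              have := (le_div_iff_of_neg hneg).mp (hb ▸ hti)
              linarith [this]
            have h2 : t * z i ≤ 0 := mul_nonpos_of_nonneg_of_nonpos ht0 hneg.le
            constructor <;> simp only [hydef] <;> linarith
          · have hb : b i = (1 - x i) / z i := by
              rw [hbdef]; simp [hpos]
            have h1 : t * z i ≤ 1 - x i := (le_div_iff₀ hpos).mp (hb ▸ hti)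
            have h2 : 0 ≤ t * z i := mul_nonneg ht0 hpos.le
            constructor <;> simp only [hydef] <;> linarith
        · rw [hyT i hiT]; exact hx i
      have hstar : |y istar| = 1 := by
        obtain ⟨hiF, hiz⟩ := hTF istar histar
        rcases lt_or_gt_of_ne hiz with hneg | hpos
        · have : y istar = -1 := by
            simp only [hydef, htdef, hbdef, not_lt.mpr hneg.le, if_false]
            field_simp
            ring
          rw [this, abs_neg, abs_one]
        · have : y istar = 1 := by
            simp only [hydef, htdef, hbdef, hpos, if_true]
            field_simp
            ring
          rw [this, abs_one]
      have hFy : ({i | |y i| ≠ 1} : Finset (Fin N)) ⊆ F.erase istar := by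
        intro i hi
        have hyi : |y i| ≠ 1 := by simpa using hi
        rw [Finset.mem_erase]
        constructor
        · rintro rfl; exact hyi hstar
        · by_contra hiF
          have hz0 : z i = 0 := hzF i hiF
          have : |x i| = 1 := by
            by_contra h
            exact hiF (by simpa [hFdef] using h)
          exact hyi (by simp [hydef, hz0, this])
      have hcard' : ({i | |y i| ≠ 1} : Finset (Fin N)).card ≤ k := by
        have h1 := Finset.card_le_card hFy
        have h2 : (F.erase istar).card = F.card - 1 :=
          Finset.card_erase_of_mem (hTF istar histar).1
        omega
      have hsum : ∀ j, ∑ i, y i * B i j = ∑ i, x i * B i j := by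
        intro j
        have : ∑ i, y i * B i j = ∑ i, x i * B i j + t * ∑ i, z i * B i j := by
          rw [Finset.mul_sum, ← Finset.sum_add_distrib]
          apply Finset.sum_congr rfl
          intro i _
          simp only [hydef]; ring
        rw [this, hz j, mul_zero, add_zero]
      obtain ⟨y', hy'1, hy'2, hy'3⟩ := ih y hy1 hcard'
      exact ⟨y', hy'1, fun j => (hy'2 j).trans (hsum j), hy'3⟩

/-- Discrepancy: signs `θ i = ±1` making all `m` signed column sums at most `m * c`. -/
lemma disc {N m : ℕ} (B : Fin N → Fin m → ℝ) (c : ℝ) (hc : 0 ≤ c)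
    (hB : ∀ i j, |B i j| ≤ c) :
    ∃ θ : Fin N → ℝ, (∀ i, θ i = 1 ∨ θ i = -1) ∧ ∀ j, |∑ i, θ i * B i j| ≤ m * c := by
  obtain ⟨y, hy1, hy2, hy3⟩ := round_step B N (fun _ => 0) (by simp)
    (le_trans (Finset.card_le_univ _) (by simp))
  have hy0 : ∀ j, ∑ i, y i * B i j = 0 := by
    intro j; rw [hy2 j]; simp
  classical
  refine ⟨fun i => if y i < 0 then -1 else 1, fun i => by by_cases h : y i < 0 <;> simp [h], ?_⟩
  intro j
  set θ : Fin N → ℝ := fun i => if y i < 0 then -1 else 1 with hθ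
  have key : ∑ i, θ i * B i j = ∑ i, (θ i - y i) * B i j := by
    rw [← sub_eq_zero, ← Finset.sum_sub_distrib]
    have : ∀ i, θ i * B i j - (θ i - y i) * B i j = y i * B i j := fun i => by ring
    simp only [this]
    exact hy0 j
  rw [key]
  calc |∑ i, (θ i - y i) * B i j| ≤ ∑ i, |(θ i - y i) * B i j| :=
        Finset.abs_sum_le_sum_abs _ _
    _ = ∑ i ∈ ({i | |y i| ≠ 1} : Finset (Fin N)), |(θ i - y i) * B i j| := by
        refine (Finset.sum_subset (Finset.subset_univ _) ?_).symm
        intro i _ hi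
        have hyi : |y i| = 1 := by simpa using hi
        have : θ i = y i := by
          rcases abs_eq (by norm_num : (0:ℝ) ≤ 1) |>.mp hyi with h | h
          · simp [hθ, h]
          · simp [hθ, h]
        simp [this]
    _ ≤ ∑ i ∈ ({i | |y i| ≠ 1} : Finset (Fin N)), c := by
        apply Finset.sum_le_sum
        intro i _
        rw [abs_mul]
        have h1 : |θ i - y i| ≤ 1 := by
          have hx1 := (abs_le.mp (hy1 i)).1
          have hx2 := (abs_le.mp (hy1 i)).2
          by_cases h : y i < 0 <;> simp only [hθ, h, if_true, if_false] <;>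
            rw [abs_le] <;> constructor <;> linarith
        calc |θ i - y i| * |B i j| ≤ 1 * c :=
              mul_le_mul h1 (hB i j) (abs_nonneg _) zero_le_one
          _ = c := one_mul c
    _ = ({i | |y i| ≠ 1} : Finset (Fin N)).card * c := by rw [Finset.sum_const, nsmul_eq_mul]
    _ ≤ m * c := by
        apply mul_le_mul_of_nonneg_right _ hc
        exact_mod_cast hy3

/-- The `(1,q)`-norm of the submatrix of the `N × n` real matrix `A` formed by the rows
with indices in `Ω`: `sup { (∑_{i ∈ Ω} |(Ax)ᵢ|^q)^(1/q) : ‖x‖_{ℓ₁ⁿ} ≤ 1 }`. -/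
noncomputable def norm1q {N n : ℕ} (A : Matrix (Fin N) (Fin n) ℝ) (Ω : Finset (Fin N))
    (q : ℝ) : ℝ :=
  sSup {r : ℝ | ∃ x : Fin n → ℝ, (∑ j, |x j|) ≤ 1 ∧
    r = (∑ i ∈ Ω, |∑ j, A i j * x j| ^ q) ^ (1 / q)}

/-- Let `A = (aⱼⁱ)` be an `N × n` real matrix with columns `w₁, …, w_n`, let `1 ≤ q < ∞` and
`0 < ε < 1`, and assume `|aⱼⁱ| ≤ ε ‖wⱼ‖_{ℓ_q^N}` for every `i` and `j`. Then there exists a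
partition `{1, …, N} = Ω₁ ∪ Ω₂`, `Ω₁ ∩ Ω₂ = ∅`, such that for `k = 1, 2`,
`‖A(Ω_k)‖_(1,q) ≤ ((1 + n ε^q)/2)^(1/q) ‖A‖_(1,q)`. -/
theorem statement5 (N n : ℕ) (A : Matrix (Fin N) (Fin n) ℝ) (q ε : ℝ)
    (hq : 1 ≤ q) (hε : 0 < ε) (hε' : ε < 1)
    (hA : ∀ (i : Fin N) (j : Fin n), |A i j| ≤ ε * (∑ i', |A i' j| ^ q) ^ (1 / q)) :
    ∃ Ω₁ Ω₂ : Finset (Fin N), Ω₁ ∪ Ω₂ = Finset.univ ∧ Ω₁ ∩ Ω₂ = ∅ ∧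
      ∀ Ω ∈ ({Ω₁, Ω₂} : Set (Finset (Fin N))),
        norm1q A Ω q ≤ ((1 + n * ε ^ q) / 2) ^ (1 / q) * norm1q A Finset.univ q := by
  classical
  have hq0 : q ≠ 0 := by positivity
  have hq0' : (0:ℝ) < q := lt_of_lt_of_le one_pos hq
  set C : Fin n → ℝ := fun j => ∑ i, |A i j| ^ q with hCdef
  have hC0 : ∀ j, 0 ≤ C j := fun j =>
    Finset.sum_nonneg fun i _ => Real.rpow_nonneg (abs_nonneg _) q
  set M : ℝ := norm1q A Finset.univ q with hMdef
  -- generic upper bound for norm1q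
  have hub : ∀ (Ω : Finset (Fin N)) (D : ℝ), 0 ≤ D →
      (∀ j, (∑ i ∈ Ω, |A i j| ^ q) ^ (1 / q) ≤ D) → norm1q A Ω q ≤ D := by
    intro Ω D hD hcol
    apply Real.sSup_le _ hD
    rintro r ⟨x, hx, rfl⟩
    calc (∑ i ∈ Ω, |∑ j, A i j * x j| ^ q) ^ (1 / q)
        ≤ ∑ j, |x j| * (∑ i ∈ Ω, |A i j| ^ q) ^ (1 / q) := mink A Ω hq x Finset.univ
      _ ≤ ∑ j : Fin n, |x j| * D := Finset.sum_le_sum fun j _ =>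
          mul_le_mul_of_nonneg_left (hcol j) (abs_nonneg _)
      _ = (∑ j, |x j|) * D := by rw [Finset.sum_mul]
      _ ≤ 1 * D := mul_le_mul_of_nonneg_right hx hD
      _ = D := one_mul D
  -- the defining set for the full matrix and its properties
  have hbdd : BddAbove {r : ℝ | ∃ x : Fin n → ℝ, (∑ j, |x j|) ≤ 1 ∧
      r = (∑ i ∈ Finset.univ, |∑ j, A i j * x j| ^ q) ^ (1 / q)} := by
    refine ⟨∑ j, (C j) ^ (1 / q), ?_⟩
    rintro r ⟨x, hx, rfl⟩
    have hxj : ∀ j, |x j| ≤ 1 := fun j =>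
      le_trans (Finset.single_le_sum (fun j _ => abs_nonneg (x j)) (Finset.mem_univ j)) hx
    refine le_trans (mink A Finset.univ hq x Finset.univ) (Finset.sum_le_sum ?_)
    intro j _
    calc |x j| * (∑ i ∈ Finset.univ, |A i j| ^ q) ^ (1 / q)
        ≤ 1 * (∑ i ∈ Finset.univ, |A i j| ^ q) ^ (1 / q) :=
          mul_le_mul_of_nonneg_right (hxj j) (Real.rpow_nonneg (hC0 j) _)
      _ = (C j) ^ (1 / q) := by rw [one_mul]
  have hmem0 : (0:ℝ) ∈ {r : ℝ | ∃ x : Fin n → ℝ, (∑ j, |x j|) ≤ 1 ∧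
      r = (∑ i ∈ Finset.univ, |∑ j, A i j * x j| ^ q) ^ (1 / q)} := by
    refine ⟨fun _ => 0, by simp, ?_⟩
    simp [Real.zero_rpow hq0, Real.zero_rpow (one_div_ne_zero hq0),
      Real.zero_rpow (inv_ne_zero hq0)]
  have hM0 : 0 ≤ M := le_csSup hbdd hmem0
  have hmemj : ∀ j : Fin n, ((C j) ^ (1 / q)) ∈ {r : ℝ | ∃ x : Fin n → ℝ, (∑ j, |x j|) ≤ 1 ∧
      r = (∑ i ∈ Finset.univ, |∑ j, A i j * x j| ^ q) ^ (1 / q)} := by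
    intro j
    refine ⟨fun j' => if j' = j then 1 else 0, ?_, ?_⟩
    · have habs : ∀ x : Fin n, |if x = j then (1:ℝ) else 0| = if x = j then 1 else 0 :=
        fun x => by split <;> simp
      simp [habs]
    · have hx : ∀ i : Fin N, ∑ j' : Fin n, A i j' * (if j' = j then (1:ℝ) else 0) = A i j := by
        intro i
        rw [Finset.sum_eq_single j]
        · simp
        · intro b _ hb; simp [hb]
        · intro h; exact absurd (Finset.mem_univ j) h
      simp only [hx]
      rfl
  have hCM : ∀ j, C j ≤ M ^ q := by
    intro j
    have h1 : (C j) ^ (1 / q) ≤ M := le_csSup hbdd (hmemj j)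
    calc C j = ((C j) ^ (1 / q)) ^ q := by
          rw [← Real.rpow_mul (hC0 j), one_div_mul_cancel hq0, Real.rpow_one]
      _ ≤ M ^ q := Real.rpow_le_rpow (Real.rpow_nonneg (hC0 j) _) h1 hq0'.le
  -- entrywise bound for the discrepancy lemma
  have hc0 : (0:ℝ) ≤ ε ^ q * M ^ q :=
    mul_nonneg (Real.rpow_nonneg hε.le q) (Real.rpow_nonneg hM0 q)
  have hBbd : ∀ (i : Fin N) (j : Fin n), abs (|A i j| ^ q) ≤ ε ^ q * M ^ q := by
    intro i j
    rw [abs_of_nonneg (Real.rpow_nonneg (abs_nonneg _) q)]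
    calc |A i j| ^ q ≤ (ε * (C j) ^ (1 / q)) ^ q :=
          Real.rpow_le_rpow (abs_nonneg _) (hA i j) hq0'.le
      _ = ε ^ q * ((C j) ^ (1 / q)) ^ q :=
          Real.mul_rpow hε.le (Real.rpow_nonneg (hC0 j) _)
      _ = ε ^ q * C j := by
          rw [← Real.rpow_mul (hC0 j), one_div_mul_cancel hq0, Real.rpow_one]
      _ ≤ ε ^ q * M ^ q :=
          mul_le_mul_of_nonneg_left (hCM j) (Real.rpow_nonneg hε.le q)
  obtain ⟨θ, hθpm, hθ⟩ := disc (fun i j => |A i j| ^ q) (ε ^ q * M ^ q) hc0 hBbd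
  refine ⟨Finset.univ.filter (fun i => θ i = 1), Finset.univ.filter (fun i => ¬ θ i = 1),
    Finset.filter_union_filter_not_eq _ _,
    Finset.disjoint_iff_inter_eq_empty.mp (Finset.disjoint_filter_filter_not _ _ _), ?_⟩
  -- per-column bounds for both parts
  have hqsum : ∀ (Ω : Finset (Fin N)), (Ω = Finset.univ.filter (fun i => θ i = 1) ∨
      Ω = Finset.univ.filter (fun i => ¬ θ i = 1)) →
      ∀ j, ∑ i ∈ Ω, |A i j| ^ q ≤ (1 + n * ε ^ q) / 2 * M ^ q := by
    intro Ω hΩ j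
    have hsplit : (∑ i ∈ Finset.univ.filter (fun i => θ i = 1), |A i j| ^ q)
        + ∑ i ∈ Finset.univ.filter (fun i => ¬ θ i = 1), |A i j| ^ q = C j :=
      Finset.sum_filter_add_sum_filter_not _ _ _
    have hsigned : ∑ i, θ i * |A i j| ^ q
        = (∑ i ∈ Finset.univ.filter (fun i => θ i = 1), |A i j| ^ q)
          - ∑ i ∈ Finset.univ.filter (fun i => ¬ θ i = 1), |A i j| ^ q := by
      rw [← Finset.sum_filter_add_sum_filter_not Finset.univ (fun i => θ i = 1)
        (fun i => θ i * |A i j| ^ q)]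
      rw [sub_eq_add_neg]
      congr 1
      · apply Finset.sum_congr rfl
        intro i hi
        rw [(Finset.mem_filter.mp hi).2, one_mul]
      · rw [← Finset.sum_neg_distrib]
        apply Finset.sum_congr rfl
        intro i hi
        have h1 : θ i = -1 := (hθpm i).resolve_left (Finset.mem_filter.mp hi).2
        rw [h1]; ring
    have habs := abs_le.mp (hθ j)
    have hCMj := hCM j
    rcases hΩ with rfl | rfl
    · have := habs.2
      rw [hsigned] at this
      nlinarith [hsplit]
    · have := habs.1
      rw [hsigned] at this
      nlinarith [hsplit]
  -- conclude
  intro Ω hΩ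
  have hfac0 : (0:ℝ) ≤ (1 + n * ε ^ q) / 2 := by
    have : (0:ℝ) ≤ (n : ℝ) * ε ^ q :=
      mul_nonneg (Nat.cast_nonneg n) (Real.rpow_nonneg hε.le q)
    linarith
  have hRHS0 : 0 ≤ ((1 + n * ε ^ q) / 2) ^ (1 / q) * M :=
    mul_nonneg (Real.rpow_nonneg hfac0 _) hM0
  have hΩ' : Ω = Finset.univ.filter (fun i => θ i = 1) ∨
      Ω = Finset.univ.filter (fun i => ¬ θ i = 1) := by
    rcases hΩ with rfl | hΩ
    · left; rfl
    · right; exact hΩ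
  apply hub Ω _ hRHS0
  intro j
  calc (∑ i ∈ Ω, |A i j| ^ q) ^ (1 / q)
      ≤ ((1 + n * ε ^ q) / 2 * M ^ q) ^ (1 / q) :=
        Real.rpow_le_rpow (Finset.sum_nonneg fun i _ => Real.rpow_nonneg (abs_nonneg _) q)
          (hqsum Ω hΩ' j) (by positivity)
    _ = ((1 + n * ε ^ q) / 2) ^ (1 / q) * M := by
        rw [Real.mul_rpow hfac0 (Real.rpow_nonneg hM0 q), ← Real.rpow_mul hM0,
          mul_one_div_cancel hq0, Real.rpow_one]
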